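/- Let f : A ⟶ B be a chain map of ℤ-indexed cochain complexes over an additive category. Then f is a homotopy equivalence if and only if the mapping cone Cone(f) is contractible. -/

import Mathlib

open CategoryTheory CategoryTheory.Limits CochainComplex

section helpers

variable {V W : Type*} [Category V] [Category W] [Preadditive V] [Preadditive W]
  {ι : Type*} {c : ComplexShape ι}

/-- Transfer contractibility along an isomorphism of complexes. -/
noncomputable def contractibleOfIso {X Y : HomologicalComplex V c} (e : X ≅ Y)
    (h : Homotopy (𝟙 X) 0) : Homotopy (𝟙 Y) 0 :=
  (Homotopy.ofEq (by simp)).trans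
    (((h.compRight e.hom).compLeft e.inv).trans (Homotopy.ofEq (by simp)))

/-- A fully faithful additive functor reflects homotopies. -/
noncomputable def homotopyOfMap (G : V ⥤ W) [G.Additive] [G.Full] [G.Faithful]
    {K L : HomologicalComplex V c} {u v : K ⟶ L}
    (h : Homotopy ((G.mapHomologicalComplex c).map u) ((G.mapHomologicalComplex c).map v)) :
    Homotopy u v where
  hom i j := G.preimage (h.hom i j)
  zero i j w := G.map_injective
    (by erw [Functor.map_preimage, Functor.map_zero]; exact h.zero i j w)
  comm i := G.map_injective (by
    have := h.comm i
    simp only [Functor.mapHomologicalComplex_map_f] at this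
    simp only [Functor.map_add, this, dNext, prevD, AddMonoidHom.mk'_apply,
      Functor.map_comp, Functor.map_preimage, Functor.mapHomologicalComplex_obj_d]
    erw [Functor.map_preimage, Functor.map_preimage]
    rfl)

/-- A fully faithful functor is "full" on homological complexes. -/
noncomputable def preimageComplexHom (G : V ⥤ W) [G.Additive] [G.Full] [G.Faithful]
    {K L : HomologicalComplex V c}
    (u' : (G.mapHomologicalComplex c).obj K ⟶ (G.mapHomologicalComplex c).obj L) : K ⟶ L where
  f i := G.preimage (u'.f i)
  comm' i j hij := G.map_injective (by
    have := u'.comm i j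
    simp only [Functor.mapHomologicalComplex_obj_d, Functor.mapHomologicalComplex_obj_X] at this
    rw [Functor.map_comp, Functor.map_comp]
    erw [Functor.map_preimage, Functor.map_preimage]; exact this)

lemma map_preimageComplexHom (G : V ⥤ W) [G.Additive] [G.Full] [G.Faithful]
    {K L : HomologicalComplex V c}
    (u' : (G.mapHomologicalComplex c).obj K ⟶ (G.mapHomologicalComplex c).obj L) :
    (G.mapHomologicalComplex c).map (preimageComplexHom G u') = u' := by
  ext i
  simp [preimageComplexHom]
  exact G.map_preimage _

end helpers

section zeroObj

variable {D : Type*} [Category D] [Preadditive D] [HasZeroObject D] [HasBinaryBiproducts D]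

lemma aux_zero_case {A B : CochainComplex D ℤ} (f : A ⟶ B) :
    (∃ g : B ⟶ A, Nonempty (Homotopy (f ≫ g) (𝟙 A)) ∧ Nonempty (Homotopy (g ≫ f) (𝟙 B))) ↔
      Nonempty (Homotopy (𝟙 (mappingCone f)) 0) := by
  rw [← HomotopyCategory.isZero_quotient_obj_iff]
  have hT := HomotopyCategory.mappingCone_triangleh_distinguished f
  rw [show (HomotopyCategory.quotient D (ComplexShape.up ℤ)).obj (mappingCone f) =
    (mappingCone.triangleh f).obj₃ from rfl,
    Pretriangulated.Triangle.isZero₃_iff_isIso₁ _ hT]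
  constructor
  · rintro ⟨g, ⟨h1⟩, ⟨h2⟩⟩
    have : IsIso ((HomotopyCategory.quotient D (ComplexShape.up ℤ)).map f) := by
      refine ⟨(HomotopyCategory.quotient D (ComplexShape.up ℤ)).map g, ?_, ?_⟩
      · rw [← Functor.map_comp, ← CategoryTheory.Functor.map_id]
        exact HomotopyCategory.eq_of_homotopy _ _ h1
      · rw [← Functor.map_comp, ← CategoryTheory.Functor.map_id]
        exact HomotopyCategory.eq_of_homotopy _ _ h2
    exact this
  · intro h
    have h' : IsIso ((HomotopyCategory.quotient D (ComplexShape.up ℤ)).map f) := h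
    refine ⟨Quot.out (inv ((HomotopyCategory.quotient D (ComplexShape.up ℤ)).map f)), ⟨?_⟩, ⟨?_⟩⟩
    · apply HomotopyCategory.homotopyOfEq
      erw [Functor.map_comp, HomotopyCategory.quotient_map_out, IsIso.hom_inv_id,
        CategoryTheory.Functor.map_id]
    · apply HomotopyCategory.homotopyOfEq
      erw [Functor.map_comp, HomotopyCategory.quotient_map_out, IsIso.inv_hom_id,
        CategoryTheory.Functor.map_id]

end zeroObj

instance preadditiveYoneda_additive {C : Type*} [Category C] [Preadditive C] :
    (preadditiveYoneda : C ⥤ Cᵒᵖ ⥤ AddCommGrpCat).Additive where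
  map_add {X Y f g} := by
    ext Z x
    simp [preadditiveYoneda, Preadditive.comp_add]
    erw [NatTrans.app_add, AddCommGrpCat.hom_add_apply]
    exact Preadditive.comp_add _ _ _ _ _ _

/-- A chain map of `ℤ`-indexed cochain complexes over an additive category is a homotopy
equivalence if and only if its mapping cone is contractible. -/
theorem mappingCone_contractible_iff_homotopyEquiv
    {C : Type*} [Category C] [Preadditive C] [HasBinaryBiproducts C]
    {A B : CochainComplex C ℤ} (f : A ⟶ B) :
    (∃ g : B ⟶ A, Nonempty (Homotopy (f ≫ g) (𝟙 A)) ∧ Nonempty (Homotopy (g ≫ f) (𝟙 B))) ↔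
      Nonempty (Homotopy (𝟙 (mappingCone f)) 0) := by
  let G := preadditiveYoneda (C := C)
  let F := G.mapHomologicalComplex (ComplexShape.up ℤ)
  haveI : G.Additive := preadditiveYoneda_additive
  have e := CochainComplex.mappingCone.mapHomologicalComplexIso f G
  constructor
  · rintro ⟨g, ⟨h1⟩, ⟨h2⟩⟩
    have : ∃ g' : F.obj B ⟶ F.obj A, Nonempty (Homotopy (F.map f ≫ g') (𝟙 (F.obj A))) ∧
        Nonempty (Homotopy (g' ≫ F.map f) (𝟙 (F.obj B))) :=
      ⟨F.map g,
        ⟨(Homotopy.ofEq (F.map_comp f g).symm).trans ((G.mapHomotopy h1).trans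
          (Homotopy.ofEq (F.map_id A)))⟩,
        ⟨(Homotopy.ofEq (F.map_comp g f).symm).trans ((G.mapHomotopy h2).trans
          (Homotopy.ofEq (F.map_id B)))⟩⟩
    rw [aux_zero_case (F.map f)] at this
    obtain ⟨h⟩ := this
    exact ⟨homotopyOfMap G ((Homotopy.ofEq (F.map_id _)).trans
      ((contractibleOfIso e.symm h).trans (Homotopy.ofEq (F.map_zero _ _).symm)))⟩
  · rintro ⟨h⟩
    have hD : Nonempty (Homotopy (𝟙 (mappingCone (F.map f))) 0) :=
      ⟨contractibleOfIso e ((Homotopy.ofEq (F.map_id _).symm).trans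
        ((G.mapHomotopy h).trans (Homotopy.ofEq (F.map_zero _ _))))⟩
    rw [← aux_zero_case (F.map f)] at hD
    obtain ⟨g', ⟨h1⟩, ⟨h2⟩⟩ := hD
    refine ⟨preimageComplexHom G g', ⟨?_⟩, ⟨?_⟩⟩
    · refine homotopyOfMap G ((Homotopy.ofEq ?_).trans (h1.trans (Homotopy.ofEq (F.map_id A).symm)))
      rw [F.map_comp, map_preimageComplexHom]
    · refine homotopyOfMap G ((Homotopy.ofEq ?_).trans (h2.trans (Homotopy.ofEq (F.map_id B).symm)))
      rw [F.map_comp, map_preimageComplexHom]
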